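/- Let G be a connected Lie group with universal covering group p : G̃ → G (so G̃ is a simply connected Lie group and p is a surjective continuous homomorphism which is a covering map, with kernel isomorphic to π₁(G)). Let Γ be an exponent-canceling group of rank r, with generators γ_1, …, γ_r given by the images of the free generators of the presentation. For 1 ≤ k ≤ r, let ι_k : G → Hom(Γ, G) be the continuous k-th factor inclusion sending g ∈ G to the homomorphism γ_k ↦ g, γ_i ↦ 1 for i ≠ k (well defined because each relator has total exponent zero in each generator); its image lies in the connected component Hom⁰(Γ, G) of the trivial homomorphism. If Hom(Γ, G̃) is simply connected, then the map π₁(G, 1)^r → π₁(Hom⁰(Γ, G), triv) sending (c_1, …, c_r) to the product (ι_1)_*(c_1) · (ι_2)_*(c_2) ⋯ (ι_r)_*(c_r) is a well-defined group isomorphism. In particular, the images of the maps (ι_k)_* generate π₁(Hom⁰(Γ, G)). -/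

import Mathlib

open scoped Manifold

/-- The representation space `Hom(Γ, G)`: group homomorphisms `Γ → G`, topologized by
pointwise convergence (as a subspace of `Γ → G`). -/
abbrev HomSpace (Γ G : Type*) [Group Γ] [Group G] [TopologicalSpace G] : Type _ :=
  {f : Γ → G // ∀ a b, f (a * b) = f a * f b}

/-- The trivial homomorphism. -/
abbrev trivialHom (Γ G : Type*) [Group Γ] [Group G] [TopologicalSpace G] : HomSpace Γ G :=
  ⟨fun _ => 1, by simp⟩

/-- The map induced on fundamental groups by a continuous map `f` with `f x = y`. -/
noncomputable def pi1Map {X Y : Type} [TopologicalSpace X] [TopologicalSpace Y]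
    (f : C(X, Y)) (x : X) (y : Y) (h : f x = y) :
    FundamentalGroup X x → FundamentalGroup Y y := by
  subst h
  exact fun c =>
    @FundamentalGroup.fromPath (TopCat.of Y) _ (f x)
      (Path.Homotopic.Quotient.map (@FundamentalGroup.toPath (TopCat.of X) _ x c) f)

section Pi1

attribute [local instance] Path.Homotopic.setoid

variable {X Y Z : Type} [TopologicalSpace X] [TopologicalSpace Y] [TopologicalSpace Z]

lemma fromPath_toPath {x : X} (a : FundamentalGroup X x) :
    @FundamentalGroup.fromPath (TopCat.of X) _ x (@FundamentalGroup.toPath (TopCat.of X) _ x a) = a :=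
  rfl

lemma pi1Map_def (f : C(X, Y)) (x : X) (a : FundamentalGroup X x) :
    pi1Map f x (f x) rfl a =
      @FundamentalGroup.fromPath (TopCat.of Y) _ (f x)
        ((@FundamentalGroup.toPath (TopCat.of X) _ x a).map f) := rfl

lemma toPath_fromPath {x : X} (p : Path.Homotopic.Quotient x x) :
    @FundamentalGroup.toPath (TopCat.of X) _ x (@FundamentalGroup.fromPath (TopCat.of X) _ x p) = p :=
  rfl

lemma toPath_mul {x : X} (a b : FundamentalGroup X x) :
    @FundamentalGroup.toPath (TopCat.of X) _ x (a * b) =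
      (@FundamentalGroup.toPath (TopCat.of X) _ x b).trans
        (@FundamentalGroup.toPath (TopCat.of X) _ x a) := rfl

lemma one_eq_fromPath_refl (x : X) :
    (1 : FundamentalGroup X x) =
      @FundamentalGroup.fromPath (TopCat.of X) _ x ⟦Path.refl x⟧ :=
  rfl

lemma map_lift_q {x₀ x₁ : X} (P₀ : Path x₀ x₁) (f : C(X, Y)) :
    (Quotient.mk _ (P₀.map f.continuous) : Path.Homotopic.Quotient (f x₀) (f x₁)) =
      Path.Homotopic.Quotient.map (Quotient.mk _ P₀) f := rfl

lemma comp_lift_q {x₀ x₁ x₂ : X} (P₀ : Path x₀ x₁) (P₁ : Path x₁ x₂) :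
    (Quotient.mk _ (P₀.trans P₁) : Path.Homotopic.Quotient x₀ x₂) =
      Path.Homotopic.Quotient.trans (Quotient.mk _ P₀) (Quotient.mk _ P₁) := rfl

lemma mapFn_comp' {x₀ x₁ : X} (p : Path.Homotopic.Quotient x₀ x₁) (f : C(X, Y)) (g : C(Y, Z)) :
    (p.map f).map g = p.map (g.comp f) := by
  induction p using Quotient.inductionOn with
  | h p =>
    rw [← map_lift_q, ← map_lift_q, ← map_lift_q,
      Path.map_map]
    rfl

lemma mapFn_quotient_comp {x₀ x₁ x₂ : X} (p : Path.Homotopic.Quotient x₀ x₁)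
    (q : Path.Homotopic.Quotient x₁ x₂) (f : C(X, Y)) :
    (p.trans q).map f = (p.map f).trans (q.map f) := by
  induction p using Quotient.inductionOn with
  | h p =>
    induction q using Quotient.inductionOn with
    | h q =>
      rw [← comp_lift_q, ← map_lift_q, Path.map_trans,
        comp_lift_q, ← map_lift_q, ← map_lift_q]

lemma pi1Map_mul (f : C(X, Y)) (x : X) (y : Y) (h : f x = y) (a b : FundamentalGroup X x) :
    pi1Map f x y h (a * b) = pi1Map f x y h a * pi1Map f x y h b := by
  subst h
  show ((@FundamentalGroup.toPath (TopCat.of X) _ x (a * b)).map f) = _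
  rw [toPath_mul, mapFn_quotient_comp]
  rfl

lemma pi1Map_comp (f : C(X, Y)) (g : C(Y, Z)) (x : X) (y : Y) (z : Z)
    (h₁ : f x = y) (h₂ : g y = z) (a : FundamentalGroup X x) :
    pi1Map g y z h₂ (pi1Map f x y h₁ a) =
      pi1Map (g.comp f) x z (by rw [ContinuousMap.comp_apply, h₁, h₂]) a := by
  subst h₁; subst h₂
  show ((@FundamentalGroup.toPath (TopCat.of Y) _ (f x)
      (@FundamentalGroup.fromPath (TopCat.of Y) _ (f x)
        ((@FundamentalGroup.toPath (TopCat.of X) _ x a).map f))).map g) = _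
  rw [toPath_fromPath, mapFn_comp']
  rfl

lemma pi1Map_congr (f₁ f₂ : C(X, Y)) (hf : f₁ = f₂) (x : X) (y : Y) (h₁ : f₁ x = y)
    (h₂ : f₂ x = y) (a : FundamentalGroup X x) :
    pi1Map f₁ x y h₁ a = pi1Map f₂ x y h₂ a := by
  subst hf; subst h₁
  have : h₂ = rfl := rfl
  subst this
  rfl

lemma pi1Map_id (x : X) (a : FundamentalGroup X x) :
    pi1Map (ContinuousMap.id X) x x rfl a = a := by
  conv_rhs => rw [← fromPath_toPath a]
  show ((@FundamentalGroup.toPath (TopCat.of X) _ x a).map (ContinuousMap.id X)) = _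
  induction (@FundamentalGroup.toPath (TopCat.of X) _ x a) using Quotient.inductionOn with
  | h p =>
    rw [← map_lift_q]
    exact congrArg (Quotient.mk _) (Path.map_id p)

lemma pi1Map_const (x : X) (y : Y) (a : FundamentalGroup X x) :
    pi1Map (ContinuousMap.const X y) x y rfl a = 1 := by
  rw [one_eq_fromPath_refl]
  show ((@FundamentalGroup.toPath (TopCat.of X) _ x a).map (ContinuousMap.const X y)) = _
  induction (@FundamentalGroup.toPath (TopCat.of X) _ x a) using Quotient.inductionOn with
  | h p =>
    rw [← map_lift_q]
    have hp : p.map (ContinuousMap.const X y).continuous = Path.refl y := by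
      ext t; rfl
    rw [hp]
    rfl

lemma pi1Map_eq_one_iff (f : C(X, Y)) (x : X) (γ : Path x x) :
    pi1Map f x (f x) rfl (@FundamentalGroup.fromPath (TopCat.of X) _ x ⟦γ⟧) = 1 ↔
      (γ.map f.continuous).Homotopic (Path.refl (f x)) := by
  rw [one_eq_fromPath_refl]
  constructor
  · intro hh
    have h2 := hh
    have h3 : Path.Homotopic.Quotient.map ⟦γ⟧ f
        = (⟦Path.refl (f x)⟧ : Path.Homotopic.Quotient (f x) (f x)) := h2
    rw [← map_lift_q] at h3
    exact Quotient.exact h3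
  · intro hh
    show Path.Homotopic.Quotient.map ⟦γ⟧ f
        = (⟦Path.refl (f x)⟧ : Path.Homotopic.Quotient (f x) (f x))
    rw [← map_lift_q]
    exact Quotient.sound hh

lemma list_ofFn_prod_eq_single {M : Type*} [Monoid M] : ∀ {m : ℕ} (g : Fin m → M) (k : Fin m),
    (∀ j, j ≠ k → g j = 1) → (List.ofFn g).prod = g k := by
  intro m
  induction m with
  | zero => exact fun g k => k.elim0
  | succ m ih =>
    intro g k hk
    rw [List.ofFn_succ, List.prod_cons]
    rcases Fin.eq_zero_or_eq_succ k with hk0 | ⟨j, rfl⟩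
    · subst hk0
      have h1 : ∀ j : Fin m, g j.succ = 1 := fun j => hk _ (Fin.succ_ne_zero j)
      have h2 : (List.ofFn fun j : Fin m => g j.succ).prod = 1 := by
        apply List.prod_eq_one
        intro x hx
        obtain ⟨j, rfl⟩ := (List.mem_ofFn.mp hx)
        exact h1 j
      rw [h2, mul_one]
    · have h0 : g 0 = 1 := hk 0 (Fin.succ_ne_zero j).symm
      rw [h0, one_mul]
      exact ih _ j fun i hi => hk i.succ (by simpa [Fin.succ_inj] using hi)

end Pi1


open unitInterval Set

section Covering

variable {E X : Type*} [TopologicalSpace E] [TopologicalSpace X] {f : E → X}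

/-- Local (in the parameter) existence of lifts of a parameterized family of paths. -/
theorem IsCoveringMap.exists_local_lift (hf : IsCoveringMap f) {Y : Type*} [TopologicalSpace Y]
    {H : Y × I → X} (hH : Continuous H) {G₀ : Y → E} (hG₀ : Continuous G₀)
    (hfG : ∀ y, f (G₀ y) = H (y, 0)) (y₀ : Y) :
    ∃ V : Set Y, IsOpen V ∧ y₀ ∈ V ∧ ∃ K : Y × I → E,
      ContinuousOn K (V ×ˢ (Set.univ : Set I)) ∧ (∀ y ∈ V, K (y, 0) = G₀ y) ∧
      (∀ y ∈ V, ∀ s, f (K (y, s)) = H (y, s)) := by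
  classical
  -- trivializations along the path s ↦ H (y₀, s)
  haveI hne : ∀ s : I, Nonempty (f ⁻¹' {H (y₀, s)}) := fun s => by
    obtain ⟨Γ, hΓ, -⟩ := hf.exists_path_lifts ⟨fun s => H (y₀, s),
      hH.comp (continuous_const.prodMk continuous_id)⟩ (G₀ y₀) (hfG y₀).symm
    exact ⟨⟨Γ s, congrFun hΓ s⟩⟩
  let T : ∀ s : I, Bundle.Trivialization (f ⁻¹' {H (y₀, s)}) f :=
    fun s => (hf (H (y₀, s))).toTrivialization
  have hTb : ∀ s : I, H (y₀, s) ∈ (T s).baseSet := fun s =>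
    IsEvenlyCovered.mem_toTrivialization_baseSet _
  have h1 : ∀ s : I, ∃ u : Set Y, ∃ v : Set I, IsOpen u ∧ IsOpen v ∧ y₀ ∈ u ∧ s ∈ v ∧
      u ×ˢ v ⊆ H ⁻¹' (T s).baseSet := by
    intro s
    obtain ⟨u, v, hu, hv, hyu, hsv, hsub⟩ :=
      isOpen_prod_iff.mp (hH.isOpen_preimage _ (T s).open_baseSet) y₀ s (hTb s)
    exact ⟨u, v, hu, hv, hyu, hsv, hsub⟩
  choose u v huo hvo huy hvs hsub using h1
  -- a partition of the interval subordinate to the cover v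
  obtain ⟨c, hc0, hcmono, ⟨m, hm⟩, hcsub⟩ :=
    exists_monotone_Icc_subset_open_cover_unitInterval hvo (fun s _ => mem_iUnion.mpr ⟨s, hvs s⟩)
  choose sel hsel using hcsub
  refine ⟨⋂ n ∈ Finset.range m, u (sel n), isOpen_biInter_finset fun n _ => huo _,
    mem_iInter₂.mpr fun n _ => huy _, ?_⟩
  set V : Set Y := ⋂ n ∈ Finset.range m, u (sel n) with hV
  have key : ∀ n, n < m → ∀ y ∈ V, ∀ s' : I, s' ∈ Icc (c n) (c (n + 1)) →
      H (y, s') ∈ (T (sel n)).baseSet := by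
    intro n hn y hy s' hs'
    exact hsub (sel n) ⟨mem_iInter₂.mp hy n (Finset.mem_range.mpr hn), hsel n hs'⟩
  -- induction on the pieces of the partition
  have main : ∀ n : ℕ, ∃ K : Y × I → E,
      ContinuousOn K (V ×ˢ (Set.univ : Set I)) ∧ (∀ y ∈ V, K (y, 0) = G₀ y) ∧
      (∀ y ∈ V, ∀ s : I, s ≤ c n → f (K (y, s)) = H (y, s)) := by
    intro n
    induction n with
    | zero =>
      refine ⟨fun q => G₀ q.1, hG₀.comp continuous_fst |>.continuousOn, fun y _ => rfl, ?_⟩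
      intro y hy s hs
      rw [hc0] at hs
      have : s = 0 := le_antisymm hs s.2.1
      rw [this]
      exact hfG y
    | succ n ih =>
      obtain ⟨K, hKc, hK0, hKf⟩ := ih
      by_cases hn : n < m
      swap
      · -- here c n = c (n+1) = 1 and there is nothing to do
        push_neg at hn
        have h1 : c n = 1 := hm n hn
        have h2 : c (n + 1) = 1 := hm (n + 1) (le_trans hn (Nat.le_succ n))
        exact ⟨K, hKc, hK0, fun y hy s hs => hKf y hy s (by rw [h1]; rw [h2] at hs; exact hs)⟩
      -- the new piece
      set T' : Bundle.Trivialization (f ⁻¹' {H (y₀, sel n)}) f := T (sel n) with hT'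
      have hcn : c n ≤ c (n + 1) := hcmono (Nat.le_succ n)
      -- the clamping function
      set sg : I → I := fun s => ⟨max (c n : ℝ) (min (s : ℝ) (c (n + 1) : ℝ)),
        ⟨le_trans (c n).2.1 (le_max_left _ _),
         max_le (c n).2.2 (le_trans (min_le_right _ _) (c (n + 1)).2.2)⟩⟩ with hsg
      have hsgc : Continuous sg := by
        apply Continuous.subtype_mk
        exact (continuous_const.max ((continuous_subtype_val).min continuous_const))
      have hsgmem : ∀ s : I, sg s ∈ Icc (c n) (c (n + 1)) := by
        intro s
        constructor
        · exact Subtype.coe_le_coe.mp (le_max_left _ _)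
        · apply Subtype.coe_le_coe.mp
          exact max_le hcn (min_le_right _ _)
      have hsg_at : ∀ s : I, (c n : ℝ) ≤ (s : ℝ) → (s : ℝ) ≤ (c (n+1) : ℝ) → sg s = s := by
        intro s h1 h2
        apply Subtype.ext
        show max _ (min _ _) = (s : ℝ)
        rw [min_eq_left h2, max_eq_right h1]
      -- the source membership of the previous endpoint
      have hmem : ∀ y ∈ V, K (y, c n) ∈ T'.source := by
        intro y hy
        rw [T'.mem_source]
        show f (K (y, c n)) ∈ T'.baseSet
        rw [hKf y hy (c n) le_rfl]
        exact key n hn y hy (c n) ⟨le_rfl, hcn⟩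
      set B : Y × I → E := fun q =>
        T'.toOpenPartialHomeomorph.symm (H (q.1, sg q.2), (T' (K (q.1, c n))).2) with hB
      have hKcn : ContinuousOn (fun q : Y × I => K (q.1, c n)) (V ×ˢ (univ : Set I)) := by
        apply hKc.comp (Continuous.continuousOn (by fun_prop))
        intro q hq
        exact ⟨hq.1, trivial⟩
      have hBmem : ∀ q : Y × I, q ∈ V ×ˢ (univ : Set I) →
          (H (q.1, sg q.2), (T' (K (q.1, c n))).2) ∈ T'.target := by
        intro q hq
        rw [T'.mem_target]
        exact key n hn q.1 hq.1 (sg q.2) (hsgmem q.2)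
      have hBc : ContinuousOn B (V ×ˢ (univ : Set I)) := by
        apply T'.toOpenPartialHomeomorph.continuousOn_symm.comp
        · apply ContinuousOn.prodMk
          · exact (hH.comp ((continuous_fst).prodMk (hsgc.comp continuous_snd))).continuousOn
          · exact continuous_snd.comp_continuousOn (T'.continuousOn_toFun.comp hKcn
              (fun q hq => hmem q.1 hq.1))
        · intro q hq
          exact hBmem q hq
      have hagree : ∀ y ∈ V, B (y, c n) = K (y, c n) := by
        intro y hy
        show T'.toOpenPartialHomeomorph.symm (H (y, sg (c n)), (T' (K (y, c n))).2) = _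
        have h1 : sg (c n) = c n := hsg_at (c n) le_rfl (Subtype.coe_le_coe.mpr hcn)
        rw [h1]
        have h2 : H (y, c n) = (T' (K (y, c n))).1 := by
          rw [T'.coe_fst (hmem y hy)]
          exact (hKf y hy (c n) le_rfl).symm
        rw [h2, Prod.mk.eta]
        exact T'.toOpenPartialHomeomorph.left_inv (hmem y hy)
      refine ⟨fun q => if (q.2 : ℝ) ≤ (c n : ℝ) then K q else B q, ?_, ?_, ?_⟩
      · rw [continuousOn_iff_continuous_restrict] at hKc hBc ⊢
        show Continuous fun q : ↥(V ×ˢ (univ : Set I)) =>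
          if ((q : Y × I).2 : ℝ) ≤ (c n : ℝ) then K (q : Y × I) else B (q : Y × I)
        apply Continuous.if_le hKc hBc
          (continuous_subtype_val.comp (continuous_snd.comp continuous_subtype_val))
          continuous_const
        intro q hq
        obtain ⟨⟨y, s⟩, hmemq⟩ := q
        show K (y, s) = B (y, s)
        have hs : s = c n := Subtype.ext hq
        rw [hs]
        exact (hagree y hmemq.1).symm
      · intro y hy
        have h0 : ((0 : I) : ℝ) ≤ (c n : ℝ) := (c n).2.1
        show (if ((0 : I) : ℝ) ≤ (c n : ℝ) then K (y, 0) else B (y, 0)) = G₀ y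
        rw [if_pos h0]
        exact hK0 y hy
      · intro y hy s hs
        show f (if (s : ℝ) ≤ (c n : ℝ) then K (y, s) else B (y, s)) = H (y, s)
        by_cases hsc : (s : ℝ) ≤ (c n : ℝ)
        · rw [if_pos hsc]
          exact hKf y hy s hsc
        · rw [if_neg hsc]
          push_neg at hsc
          show f (T'.toOpenPartialHomeomorph.symm _) = _
          rw [T'.proj_symm_apply (hBmem (y, s) ⟨hy, trivial⟩)]
          show H (y, sg s) = H (y, s)
          rw [hsg_at s (le_of_lt hsc) (Subtype.coe_le_coe.mpr hs)]
  obtain ⟨K, hKc, hK0, hKf⟩ := main m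
  refine ⟨K, hKc, hK0, fun y hy s => hKf y hy s ?_⟩
  rw [hm m le_rfl]
  exact le_one'

end Covering

section Covering2

variable {E X : Type*} [TopologicalSpace E] [TopologicalSpace X] {f : E → X}

/-- Path lifting for covering maps. -/
theorem IsCoveringMap.exists_path_lift' (hf : IsCoveringMap f) (γ : I → X) (hγ : Continuous γ)
    (e₀ : E) (he : f e₀ = γ 0) :
    ∃ g : I → E, Continuous g ∧ g 0 = e₀ ∧ ∀ s, f (g s) = γ s := by
  obtain ⟨V, hVo, hV0, K, hKc, hK0, hKf⟩ := hf.exists_local_lift (Y := Unit)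
    (H := fun q => γ q.2) (hγ.comp continuous_snd) (G₀ := fun _ => e₀) continuous_const
    (fun _ => he) ()
  refine ⟨fun s => K ((), s), ?_, hK0 () hV0, fun s => hKf () hV0 s⟩
  exact hKc.comp_continuous (continuous_const.prodMk continuous_id)
    (fun s => ⟨hV0, trivial⟩)

/-- The lifts (with the same starting point) of two homotopic paths have the same endpoint. -/
theorem IsCoveringMap.lift_end_eq (hf : IsCoveringMap f) {x₀ x₁ : X} {γ₁ γ₂ : Path x₀ x₁}
    (h : γ₁.Homotopic γ₂) {e₀ : E} {L₁ L₂ : I → E} (hc₁ : Continuous L₁) (hc₂ : Continuous L₂)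
    (h₁ : ∀ s, f (L₁ s) = γ₁ s) (h₂ : ∀ s, f (L₂ s) = γ₂ s)
    (hs₁ : L₁ 0 = e₀) (hs₂ : L₂ 0 = e₀) : L₁ 1 = L₂ 1 := by
  classical
  obtain ⟨F⟩ := h
  have he₀ : ∀ s : I, f e₀ = F (s, 0) := by
    intro s
    rw [F.source s, ← hs₁, h₁ 0]
    exact γ₁.source
  -- a choice of a lift for each horizontal path of the homotopy
  have hM : ∀ s : I, ∃ g : I → E, Continuous g ∧ g 0 = e₀ ∧ ∀ t, f (g t) = F (s, t) := by
    intro s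
    exact hf.exists_path_lift' (fun t => F (s, t))
      (F.continuous.comp (continuous_const.prodMk continuous_id)) e₀ (he₀ s)
  choose M hMc hM0 hMf using hM
  set m : I → E := fun s => M s 1 with hm
  -- the function m is locally constant
  have hloc : ∀ s₀ : I, ∃ O : Set I, IsOpen O ∧ s₀ ∈ O ∧ ∀ s ∈ O, m s = m s₀ := by
    intro s₀
    obtain ⟨V, hVo, hV0, K, hKc, hK0, hKf⟩ := hf.exists_local_lift (Y := I)
      (H := fun q : I × I => F q) F.continuous (G₀ := fun _ => e₀) continuous_const
      (fun s => he₀ s) s₀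
    have hKM : ∀ s ∈ V, (fun t => K (s, t)) = M s := by
      intro s hs
      have hg : Continuous fun t : I => K (s, t) := by
        have := hKc.comp_continuous (f := fun t : I => (s, t))
          (continuous_const.prodMk continuous_id) (fun t => ⟨hs, trivial⟩)
        exact this
      apply hf.eq_of_comp_eq (g₁ := fun t => K (s, t)) (g₂ := M s) hg (hMc s)
        (funext fun t => show f (K (s, t)) = f (M s t) by rw [hKf s hs t, hMf s t])
        0
      show K (s, 0) = M s 0
      rw [hK0 s hs, hM0 s]
    obtain ⟨ε, hε, hball⟩ := Metric.isOpen_iff.mp hVo s₀ hV0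
    set S : Set I := Metric.ball s₀ ε with hS
    have hSV : S ⊆ V := hball
    have hSpre : IsPreconnected S := by
      have h1 : S = Subtype.val ⁻¹' Metric.ball (s₀ : ℝ) ε := by
        ext s
        simp [hS, Metric.mem_ball, Subtype.dist_eq]
      rw [h1]
      apply Topology.IsInducing.subtypeVal.isPreconnected_image.mp
      rw [Subtype.image_preimage_coe]
      apply Convex.isPreconnected
      exact (convex_Icc (0:ℝ) 1).inter (convex_ball _ _)
    have hcont : ContinuousOn (fun s : I => K (s, 1)) S := by
      apply (hKc.comp (Continuous.continuousOn (by fun_prop)) ?_).mono hSV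
      intro s hs
      exact ⟨hs, trivial⟩
    have hconst : ∀ s ∈ S, ∀ s' ∈ S, K (s, 1) = K (s', 1) := by
      intro s hs s' hs'
      exact hf.constOn_of_comp hSpre hcont
        (fun a _ a' _ => by rw [hKf a (hSV ‹a ∈ S›) 1, hKf a' (hSV ‹a' ∈ S›) 1,
          F.target, F.target]) hs hs'
    refine ⟨S, Metric.isOpen_ball, Metric.mem_ball_self hε, ?_⟩
    intro s hs
    have e1 : m s = K (s, 1) := (congrFun (hKM s (hSV hs)) 1).symm
    have e2 : m s₀ = K (s₀, 1) := (congrFun (hKM s₀ (hSV (Metric.mem_ball_self hε))) 1).symm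
    rw [e1, e2]
    exact hconst s hs s₀ (Metric.mem_ball_self hε)
  -- hence m is constant
  have hconst : ∀ s : I, m s = m 0 := by
    have hopen : IsOpen {s : I | m s = m 0} := by
      rw [isOpen_iff_mem_nhds]
      intro s hs
      obtain ⟨O, hOo, hsO, hO⟩ := hloc s
      rw [mem_nhds_iff]
      refine ⟨O, fun s' hs' => ?_, hOo, hsO⟩
      simp only [mem_setOf_eq] at hs ⊢
      rw [hO s' hs']
      exact hs
    have hclosed : IsClosed {s : I | m s = m 0} := by
      rw [← isOpen_compl_iff, isOpen_iff_mem_nhds]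
      intro s hs
      obtain ⟨O, hOo, hsO, hO⟩ := hloc s
      rw [mem_nhds_iff]
      refine ⟨O, fun s' hs' => ?_, hOo, hsO⟩
      simp only [mem_compl_iff, mem_setOf_eq] at hs ⊢
      rw [hO s' hs']
      exact hs
    rcases (isClopen_iff.mp ⟨hclosed, hopen⟩) with h | h
    · have h0 : (0 : I) ∈ {s : I | m s = m 0} := rfl
      rw [h] at h0
      exact h0.elim
    · intro s
      have hs : s ∈ {s : I | m s = m 0} := h ▸ mem_univ s
      exact hs
  -- identify the endpoints
  have hL₁ : L₁ = M 0 := by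
    apply hf.eq_of_comp_eq hc₁ (hMc 0)
      (funext fun t => show f (L₁ t) = f (M 0 t) by rw [h₁ t, hMf 0 t, F.apply_zero]; rfl) 0
    rw [hs₁, hM0]
  have hL₂ : L₂ = M 1 := by
    apply hf.eq_of_comp_eq hc₂ (hMc 1)
      (funext fun t => show f (L₂ t) = f (M 1 t) by rw [h₂ t, hMf 1 t, F.apply_one]; rfl) 0
    rw [hs₂, hM0]
  rw [hL₁, hL₂]
  exact (hconst 1).symm

end Covering2

section HomSpaceAux

variable {r : ℕ} {R : Set (FreeGroup (Fin r))}
variable {K : Type*} [Group K] [TopologicalSpace K] [IsTopologicalGroup K]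

lemma homSpace_ext (φ ψ : HomSpace (PresentedGroup R) K)
    (h : ∀ j, φ.1 (PresentedGroup.of j) = ψ.1 (PresentedGroup.of j)) : φ = ψ := by
  have key : MonoidHom.mk' φ.1 φ.2 = MonoidHom.mk' ψ.1 ψ.2 := PresentedGroup.ext h
  exact Subtype.ext (funext fun γ => DFunLike.congr_fun key γ)

lemma cont_lift_word {A : Type*} [TopologicalSpace A] (z : A → Fin r → K)
    (hz : ∀ k, Continuous fun a => z a k) (w : FreeGroup (Fin r)) :
    Continuous fun a => FreeGroup.lift (z a) w := by
  induction w using FreeGroup.induction_on with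
  | C1 => simpa only [map_one] using continuous_const
  | of x =>
    have h : (fun a : A => FreeGroup.lift (z a) (FreeGroup.of x)) = fun a => z a x :=
      funext fun a => FreeGroup.lift_apply_of
    rw [h]
    exact hz x
  | inv_of x hx => simp only [map_inv]; exact hx.inv
  | mul x y hx hy => simp only [map_mul]; exact hx.mul hy

end HomSpaceAux

section Main

attribute [local instance] Path.Homotopic.setoid

/-- Let `G` be a connected Lie group with universal covering group
`p : G̃ → G`, and let `Γ` be an exponent-canceling group of rank `r` (presented with all
relators in the commutator subgroup of `F_r`), with generators `γ_j` the images of the free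
generators.  Let `ι_k : G → Hom⁰(Γ, G)` be the `k`-th factor inclusion, sending `g` to the
homomorphism with `γ_k ↦ g` and `γ_j ↦ 1` for `j ≠ k`.  If `Hom(Γ, G̃)` is simply
connected, then `(c_1, …, c_r) ↦ (ι_1)_*(c_1) ⋯ (ι_r)_*(c_r)` is a well-defined group
isomorphism `π₁(G, 1)^r ≅ π₁(Hom⁰(Γ, G), triv)`; in particular the images of the maps
`(ι_k)_*` generate `π₁(Hom⁰(Γ, G), triv)`. -/
theorem stmt11 {n : ℕ} (G : Type) [TopologicalSpace G]
    [ChartedSpace (EuclideanSpace ℝ (Fin n)) G] [Group G] [IsTopologicalGroup G]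
    [LieGroup (𝓡 n) (⊤ : ℕ∞) G] [ConnectedSpace G]
    (Gt : Type) [Group Gt] [TopologicalSpace Gt] [IsTopologicalGroup Gt]
    [SimplyConnectedSpace Gt]
    (p : Gt →* G) (hp_cont : Continuous p) (hp_surj : Function.Surjective p)
    (hp_cov : IsCoveringMap p)
    (r : ℕ) (R : Set (FreeGroup (Fin r)))
    (hR : ∀ w ∈ R, w ∈ commutator (FreeGroup (Fin r)))
    (hsc : SimplyConnectedSpace (HomSpace (PresentedGroup R) Gt)) :
    ∀ ι : Fin r → C(G, ↥(connectedComponent (trivialHom (PresentedGroup R) G))),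
      (∀ (k : Fin r) (g : G) (j : Fin r),
        (ι k g).1.1 (PresentedGroup.of j) = if j = k then g else 1) →
      ∀ hι1 : ∀ k, ι k 1 = ⟨trivialHom (PresentedGroup R) G, mem_connectedComponent⟩,
      (∃ Φ : (Fin r → FundamentalGroup G 1) ≃*
          FundamentalGroup (↥(connectedComponent (trivialHom (PresentedGroup R) G)))
            ⟨trivialHom (PresentedGroup R) G, mem_connectedComponent⟩,
        ∀ c, Φ c = (List.ofFn fun k =>
          pi1Map (ι k) 1 ⟨trivialHom (PresentedGroup R) G, mem_connectedComponent⟩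
            (hι1 k) (c k)).prod) ∧
      Subgroup.closure (⋃ k, Set.range
          (pi1Map (ι k) 1 ⟨trivialHom (PresentedGroup R) G, mem_connectedComponent⟩
            (hι1 k))) = ⊤ := by

  intro ι hι hι1
  classical
  haveI := hsc
  set x₀ : ↥(connectedComponent (trivialHom (PresentedGroup R) G)) :=
    ⟨trivialHom (PresentedGroup R) G, mem_connectedComponent⟩ with hx₀
  -- evaluation maps at the generators
  have heval : ∀ k : Fin r, Continuous fun
      x : ↥(connectedComponent (trivialHom (PresentedGroup R) G)) =>
      x.1.1 (PresentedGroup.of k) :=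
    fun k => (continuous_apply _).comp (continuous_subtype_val.comp continuous_subtype_val)
  set ek : Fin r → C(↥(connectedComponent (trivialHom (PresentedGroup R) G)), G) :=
    fun k => ⟨fun x => x.1.1 (PresentedGroup.of k), heval k⟩ with hekdef
  have hek : ∀ k, ek k x₀ = 1 := fun k => rfl
  -- the two maps
  set Φ' : FundamentalGroup (↥(connectedComponent (trivialHom (PresentedGroup R) G))) x₀ →
      (Fin r → FundamentalGroup G 1) := fun a k => pi1Map (ek k) x₀ 1 (hek k) a with hΦ'def
  set Ξ : (Fin r → FundamentalGroup G 1) →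
      FundamentalGroup (↥(connectedComponent (trivialHom (PresentedGroup R) G))) x₀ :=
    fun c => (List.ofFn fun k => pi1Map (ι k) 1 x₀ (hι1 k) (c k)).prod with hΞdef
  -- Φ' ∘ Ξ = id
  have hΦ'Ξ : ∀ c, Φ' (Ξ c) = c := by
    intro c
    funext k
    set Fm : FundamentalGroup (↥(connectedComponent (trivialHom (PresentedGroup R) G))) x₀ →*
        FundamentalGroup G 1 :=
      MonoidHom.mk' (fun a => pi1Map (ek k) x₀ 1 (hek k) a)
        (fun a b => pi1Map_mul (ek k) x₀ 1 (hek k) a b) with hFm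
    show Fm ((List.ofFn fun j => pi1Map (ι j) 1 x₀ (hι1 j) (c j)).prod) = c k
    rw [map_list_prod, List.map_ofFn]
    have hentry : ∀ j, Fm (pi1Map (ι j) 1 x₀ (hι1 j) (c j)) = if j = k then c j else 1 := by
      intro j
      have hcomp : Fm (pi1Map (ι j) 1 x₀ (hι1 j) (c j)) =
          pi1Map ((ek k).comp (ι j)) 1 1
            (by rw [ContinuousMap.comp_apply, hι1 j]; exact hek k) (c j) := by
        show pi1Map (ek k) x₀ 1 (hek k) (pi1Map (ι j) 1 x₀ (hι1 j) (c j)) = _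
        exact pi1Map_comp (ι j) (ek k) 1 x₀ 1 (hι1 j) (hek k) (c j)
      by_cases hjk : j = k
      · subst hjk
        rw [if_pos rfl, hcomp]
        have hid : (ek j).comp (ι j) = ContinuousMap.id G := by
          apply ContinuousMap.ext
          intro g
          show (ι j g).1.1 (PresentedGroup.of j) = g
          rw [hι j g j, if_pos rfl]
        rw [pi1Map_congr _ _ hid 1 1 _ rfl (c j)]
        exact pi1Map_id 1 (c j)
      · rw [if_neg hjk, hcomp]
        have hconst : (ek k).comp (ι j) = ContinuousMap.const G 1 := by
          apply ContinuousMap.ext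
          intro g
          show (ι j g).1.1 (PresentedGroup.of k) = 1
          rw [hι j g k, if_neg (Ne.symm hjk)]
        rw [pi1Map_congr _ _ hconst 1 1 _ rfl (c j)]
        exact pi1Map_const 1 1 (c j)
    have : (List.ofFn (Fm ∘ fun j => pi1Map (ι j) 1 x₀ (hι1 j) (c j))).prod
        = Fm (pi1Map (ι k) 1 x₀ (hι1 k) (c k)) := by
      apply list_ofFn_prod_eq_single (fun j => Fm (pi1Map (ι j) 1 x₀ (hι1 j) (c j))) k
      intro j hj
      rw [hentry j, if_neg hj]
    rw [this, hentry k, if_pos rfl]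
  -- the kernel of Φ' is trivial
  have hker : ∀ a, (∀ k, pi1Map (ek k) x₀ 1 (hek k) a = 1) → a = 1 := by
    intro a hk
    obtain ⟨γ, hγrep⟩ := Quotient.exists_rep
      (@FundamentalGroup.toPath
        (TopCat.of (↥(connectedComponent (trivialHom (PresentedGroup R) G)))) _ x₀ a)
    have ha : a = @FundamentalGroup.fromPath
        (TopCat.of (↥(connectedComponent (trivialHom (PresentedGroup R) G)))) _ x₀ ⟦γ⟧ := by
      rw [hγrep, fromPath_toPath]
    -- the coordinate loops are null-homotopic
    have hhomk : ∀ k, (γ.map (ek k).continuous).Homotopic (Path.refl (ek k x₀)) := by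
      intro k
      have hk' : pi1Map (ek k) x₀ (ek k x₀) rfl
          (@FundamentalGroup.fromPath
            (TopCat.of (↥(connectedComponent (trivialHom (PresentedGroup R) G)))) _ x₀ ⟦γ⟧) = 1 := by
        rw [← ha]; exact hk k
      exact (pi1Map_eq_one_iff (ek k) x₀ γ).mp hk'
    -- lift the coordinate loops through p
    have hlift : ∀ k, ∃ g : unitInterval → Gt, Continuous g ∧ g 0 = 1 ∧
        ∀ s, p (g s) = (γ.map (ek k).continuous) s := by
      intro k
      apply hp_cov.exists_path_lift' _ (γ.map (ek k).continuous).continuous_toFun 1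
      rw [map_one]
      exact ((γ.map (ek k).continuous).source).symm
    choose gt hgc hg0 hgf using hlift
    have hend : ∀ k, gt k 1 = 1 := by
      intro k
      exact hp_cov.lift_end_eq (hhomk k) (hgc k) continuous_const (hgf k)
        (fun s => by rw [map_one]; rfl) (hg0 k) rfl
    -- each relator evaluates to 1 on the lifted generators
    have hzwt : ∀ w ∈ R, ∀ t : unitInterval, FreeGroup.lift (fun k => gt k t) w = 1 := by
      intro w hw
      have hcont : Continuous fun t : unitInterval => FreeGroup.lift (fun k => gt k t) w :=
        cont_lift_word (fun t k => gt k t) (fun k => hgc k) w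
      have hproj : ∀ t, p (FreeGroup.lift (fun k => gt k t) w) = 1 := by
        intro t
        have hcomp : p.comp (FreeGroup.lift (fun k => gt k t)) =
            FreeGroup.lift (fun k => p (gt k t)) :=
          FreeGroup.ext_hom _ _ fun a => by
            simp only [MonoidHom.comp_apply, FreeGroup.lift_apply_of]
        have h1 : p (FreeGroup.lift (fun k => gt k t) w) =
            FreeGroup.lift (fun k => p (gt k t)) w := DFunLike.congr_fun hcomp w
        have hcomp2 : FreeGroup.lift (fun k => p (gt k t)) =
            (MonoidHom.mk' ((γ t).1.1) ((γ t).1.2)).comp (PresentedGroup.mk R) :=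
          FreeGroup.ext_hom _ _ fun a => by
            rw [FreeGroup.lift_apply_of, hgf a t]
            rfl
        rw [h1, DFunLike.congr_fun hcomp2 w]
        show (MonoidHom.mk' ((γ t).1.1) ((γ t).1.2)) (PresentedGroup.mk R w) = 1
        have hw1 : PresentedGroup.mk R w = 1 :=
          (QuotientGroup.eq_one_iff w).mpr (Subgroup.subset_normalClosure hw)
        rw [hw1, map_one]
      have h0 : FreeGroup.lift (fun k => gt k 0) w = 1 := by
        have hone : FreeGroup.lift (fun k => gt k 0) = (1 : FreeGroup (Fin r) →* Gt) :=
          FreeGroup.ext_hom _ _ fun a => by rw [FreeGroup.lift_apply_of, hg0 a]; rfl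
        rw [hone]
        rfl
      intro t
      have := hp_cov.const_of_comp hcont (fun t t' => by rw [hproj t, hproj t']) t 0
      rw [this, h0]
    -- the lifted loop in Hom(Γ, Gt)
    set L : unitInterval → HomSpace (PresentedGroup R) Gt :=
      fun t => ⟨⇑(PresentedGroup.toGroup (fun w hw => hzwt w hw t)),
        fun a b => map_mul _ a b⟩ with hLdef
    have hLval : ∀ (t : unitInterval) (w : FreeGroup (Fin r)),
        (L t).1 (PresentedGroup.mk R w) = FreeGroup.lift (fun k => gt k t) w := fun t w => rfl
    have hLc : Continuous L := by
      apply Continuous.subtype_mk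
      apply continuous_pi
      intro γ'
      induction γ' using PresentedGroup.induction_on with
      | H w =>
        show Continuous fun t : unitInterval => FreeGroup.lift (fun k => gt k t) w
        exact cont_lift_word (fun t k => gt k t) (fun k => hgc k) w
    have hL0 : L 0 = trivialHom (PresentedGroup R) Gt := by
      apply homSpace_ext
      intro j
      show (L 0).1 (PresentedGroup.mk R (FreeGroup.of j)) = 1
      rw [hLval, FreeGroup.lift_apply_of, hg0 j]
    have hL1 : L 1 = trivialHom (PresentedGroup R) Gt := by
      apply homSpace_ext
      intro j
      show (L 1).1 (PresentedGroup.mk R (FreeGroup.of j)) = 1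
      rw [hLval, FreeGroup.lift_apply_of, hend j]
    set Lpath : Path (trivialHom (PresentedGroup R) Gt) (trivialHom (PresentedGroup R) Gt) :=
      { toFun := L, continuous_toFun := hLc, source' := hL0, target' := hL1 } with hLpath
    -- the projection map to the connected component
    set qf : HomSpace (PresentedGroup R) Gt → HomSpace (PresentedGroup R) G :=
      fun ψ => ⟨fun γ' => p (ψ.1 γ'), fun a b => by
        show p (ψ.1 (a * b)) = p (ψ.1 a) * p (ψ.1 b)
        rw [ψ.2 a b, map_mul]⟩ with hqf
    have hqfc : Continuous qf := by
      apply Continuous.subtype_mk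
      apply continuous_pi
      intro γ'
      exact hp_cont.comp ((continuous_apply γ').comp continuous_subtype_val)
    have hqtriv : qf (trivialHom (PresentedGroup R) Gt) = trivialHom (PresentedGroup R) G :=
      Subtype.ext (funext fun γ' => map_one p)
    have hqmem : ∀ ψ, qf ψ ∈ connectedComponent (trivialHom (PresentedGroup R) G) := by
      intro ψ
      have hj : Joined (trivialHom (PresentedGroup R) Gt) ψ := PathConnectedSpace.joined _ _
      have hj2 : Joined (qf (trivialHom (PresentedGroup R) Gt)) (qf ψ) := ⟨hj.somePath.map hqfc⟩
      rw [hqtriv] at hj2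
      exact pathComponent_subset_component _ hj2
    set qX : C(HomSpace (PresentedGroup R) Gt,
        ↥(connectedComponent (trivialHom (PresentedGroup R) G))) :=
      ⟨fun ψ => ⟨qf ψ, hqmem ψ⟩, Continuous.subtype_mk hqfc _⟩ with hqX
    -- the projected loop is γ (pointwise)
    have hqL : ∀ t, qX (Lpath t) = γ t := by
      intro t
      apply Subtype.ext
      apply homSpace_ext
      intro j
      show p ((L t).1 (PresentedGroup.of j)) = (γ t).1.1 (PresentedGroup.of j)
      have hv : (L t).1 (PresentedGroup.of j) = gt j t := by
        show (L t).1 (PresentedGroup.mk R (FreeGroup.of j)) = _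
        rw [hLval, FreeGroup.lift_apply_of]
      rw [hv, hgf j t]
      rfl
    -- conclude using simple connectivity of Hom(Γ, Gt)
    have hhomL : Lpath.Homotopic (Path.refl (trivialHom (PresentedGroup R) Gt)) :=
      SimplyConnectedSpace.paths_homotopic _ _
    have hγrefl : γ.Homotopic (Path.refl x₀) := by
      obtain ⟨F⟩ := hhomL
      refine ⟨{ toFun := fun q => qX (F q),
                continuous_toFun := qX.continuous.comp F.continuous,
                map_zero_left := fun t => by
                  show qX (F (0, t)) = γ t
                  rw [F.apply_zero]
                  exact hqL t,
                map_one_left := fun t => by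
                  show qX (F (1, t)) = (Path.refl x₀) t
                  rw [F.apply_one]
                  show qX (trivialHom (PresentedGroup R) Gt) = x₀
                  exact Subtype.ext hqtriv,
                prop' := ?_ }⟩
      intro s t ht
      show qX (F (s, t)) = γ t
      rw [F.eq_fst s ht]
      exact hqL t
    rw [ha, one_eq_fromPath_refl x₀]
    exact congrArg _ (Quotient.sound hγrefl)
  -- assemble the equivalence
  have hmul : ∀ a b, Φ' (a * b) = Φ' a * Φ' b := by
    intro a b
    funext k
    exact pi1Map_mul (ek k) x₀ 1 (hek k) a b
  set Φm : FundamentalGroup (↥(connectedComponent (trivialHom (PresentedGroup R) G))) x₀ →*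
      (Fin r → FundamentalGroup G 1) := MonoidHom.mk' Φ' hmul with hΦm
  have hinj : Function.Injective Φm := by
    rw [injective_iff_map_eq_one]
    intro a ha
    exact hker a fun k => congrFun ha k
  have hleft : ∀ a, Ξ (Φ' a) = a := by
    intro a
    apply hinj
    show Φ' (Ξ (Φ' a)) = Φ' a
    exact hΦ'Ξ (Φ' a)
  set E : FundamentalGroup (↥(connectedComponent (trivialHom (PresentedGroup R) G))) x₀ ≃*
      (Fin r → FundamentalGroup G 1) :=
    { toFun := Φ', invFun := Ξ, left_inv := hleft, right_inv := hΦ'Ξ,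
      map_mul' := hmul } with hE
  constructor
  · exact ⟨E.symm, fun c => rfl⟩
  · rw [Subgroup.eq_top_iff']
    intro a
    have ha : a = (List.ofFn fun k => pi1Map (ι k) 1 x₀ (hι1 k) (Φ' a k)).prod :=
      (hleft a).symm
    rw [ha]
    apply Subgroup.list_prod_mem
    intro x hx
    obtain ⟨k, rfl⟩ := List.mem_ofFn.mp hx
    apply Subgroup.subset_closure
    exact Set.mem_iUnion.mpr ⟨k, Set.mem_range.mpr ⟨Φ' a k, rfl⟩⟩

end Main
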